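/- For t > 0, log(t + 1/2) - 1/t < ψ(t), where ψ is the digamma function. -/

import Mathlib

open Real Set Filter Topology

/-- The digamma function ψ = Γ'/Γ. -/
noncomputable def digamma (x : ℝ) : ℝ := deriv Real.Gamma x / Real.Gamma x

lemma dig_diff {x : ℝ} (hx : 0 < x) : DifferentiableAt ℝ (Real.log ∘ Real.Gamma) x := by
  refine ((Real.differentiableAt_Gamma ?_).log (Real.Gamma_ne_zero ?_)) <;>
  exact fun m ↦ ((neg_nonpos.mpr m.cast_nonneg).trans_lt hx).ne'

lemma dig_eq {x : ℝ} (hx : 0 < x) : digamma x = deriv (Real.log ∘ Real.Gamma) x := by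
  rw [Function.comp_def,
    deriv.log (Real.differentiableAt_Gamma fun m ↦ ((neg_nonpos.mpr m.cast_nonneg).trans_lt hx).ne')
    (Real.Gamma_pos_of_pos hx).ne', digamma]

lemma dig_step {x : ℝ} (hx : 0 < x) : digamma (x + 1) = digamma x + 1 / x := by
  rw [dig_eq (by positivity), dig_eq hx]
  set f := Real.log ∘ Real.Gamma
  have h_rec : ∀ y : ℝ, 0 < y → f (y + 1) = f y + Real.log y := fun y hy => by
    simp only [f, Function.comp_apply, Real.Gamma_add_one hy.ne',
      Real.log_mul hy.ne' (Real.Gamma_pos_of_pos hy).ne', add_comm]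
  rw [← deriv_comp_add_const, one_div, ← Real.deriv_log,
    ← deriv_add (dig_diff hx) (Real.differentiableAt_log hx.ne')]
  apply Filter.EventuallyEq.deriv_eq
  filter_upwards [eventually_gt_nhds hx] using h_rec

lemma dig_ub {x : ℝ} (hx : 0 < x) : digamma x ≤ Real.log x := by
  have h := Real.convexOn_log_Gamma.deriv_le_slope (mem_Ioi.mpr hx)
    (mem_Ioi.mpr (by linarith : (0:ℝ) < x + 1)) (by linarith) (dig_diff hx)
  rw [slope_def_field, ← dig_eq hx] at h
  calc digamma x ≤ (Real.log (Real.Gamma (x+1)) - Real.log (Real.Gamma x)) / (x + 1 - x) := h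
    _ = Real.log x := by
        rw [Real.Gamma_add_one hx.ne',
          Real.log_mul hx.ne' (Real.Gamma_pos_of_pos hx).ne']
        ring

lemma dig_lb {x : ℝ} (hx : 1 < x) : Real.log (x - 1) ≤ digamma x := by
  have hx0 : (0:ℝ) < x := by linarith
  have hx1 : (0:ℝ) < x - 1 := by linarith
  have h := Real.convexOn_log_Gamma.slope_le_deriv (mem_Ioi.mpr hx1)
    (mem_Ioi.mpr hx0) (by linarith) (dig_diff hx0)
  rw [slope_def_field, ← dig_eq hx0] at h
  have hG : Real.Gamma x = (x - 1) * Real.Gamma (x - 1) := by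
    rw [show x = (x - 1) + 1 by ring, Real.Gamma_add_one hx1.ne']
    ring_nf
  calc Real.log (x - 1)
      = (Real.log (Real.Gamma x) - Real.log (Real.Gamma (x-1))) / (x - (x-1)) := by
        rw [hG, Real.log_mul hx1.ne' (Real.Gamma_pos_of_pos hx1).ne']
        field_simp
        ring
    _ ≤ digamma x := h

lemma log_ineq {u : ℝ} (hu : 0 < u) : 2 * u / (2 + u) < Real.log (1 + u) := by
  have key : StrictMonoOn (fun u : ℝ => Real.log (1 + u) - 2 * u / (2 + u)) (Ici 0) := by
    apply strictMonoOn_of_deriv_pos (convex_Ici 0)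
    · apply ContinuousOn.sub
      · exact (continuousOn_const.add continuousOn_id).log
          (fun y hy => by simp at hy; show (1:ℝ) + y ≠ 0; positivity)
      · exact (continuousOn_const.mul continuousOn_id).div
          (continuousOn_const.add continuousOn_id)
          (fun y hy => by simp at hy; positivity)
    · intro y hy
      rw [interior_Ici, mem_Ioi] at hy
      have h1 : HasDerivAt (fun u : ℝ => Real.log (1 + u) - 2 * u / (2 + u))
          (1 / (1 + y) - (2 * 1 * (2 + y) - 2 * y * 1) / (2 + y) ^ 2) y := by
        apply HasDerivAt.sub
        · simpa using (((hasDerivAt_id y).const_add 1).log (by positivity))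
        · exact (((hasDerivAt_id y).const_mul 2).div ((hasDerivAt_id y).const_add 2)
            (by positivity))
      rw [h1.deriv]
      rw [sub_pos, div_lt_div_iff₀ (by positivity) (by positivity)]
      nlinarith [sq_nonneg y]
  have := key (self_mem_Ici) (mem_Ici.mpr hu.le) hu
  simpa using this

noncomputable def digAux (x : ℝ) : ℝ := digamma x - Real.log (x + 1/2) + 1 / x

theorem stmt_6 (t : ℝ) (ht : 0 < t) :
    Real.log (t + 1/2) - 1 / t < digamma t := by
  suffices h : 0 < digAux t by
    simp only [digAux] at h; linarith
  -- strict decrease step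
  have hstep : ∀ x : ℝ, 0 < x → digAux (x + 1) < digAux x := by
    intro x hx
    have h1 : digAux x - digAux (x + 1) =
        Real.log (x + 1 + 1/2) - Real.log (x + 1/2) - 1 / (x + 1) := by
      simp only [digAux, dig_step hx]; ring
    have h2 : Real.log (x + 1 + 1/2) - Real.log (x + 1/2) = Real.log (1 + 1/(x + 1/2)) := by
      rw [← Real.log_div (by positivity) (by positivity)]
      congr 1; field_simp; ring
    have h3 := log_ineq (u := 1/(x + 1/2)) (by positivity)
    have h4 : 2 * (1/(x + 1/2)) / (2 + 1/(x + 1/2)) = 1 / (x + 1) := by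
      rw [div_eq_div_iff (by positivity) (by positivity)]; field_simp; ring
    rw [h4] at h3
    linarith
  -- monotone along integer shifts
  have hmono : ∀ x : ℝ, 0 < x → ∀ n : ℕ, digAux (x + n) ≤ digAux x := by
    intro x hx n
    induction n with
    | zero => simp
    | succ k ih =>
      have hlt : digAux (x + k + 1) < digAux (x + k) := hstep _ (by positivity)
      push_cast
      calc digAux (x + (k + 1)) = digAux (x + k + 1) := by ring_nf
        _ ≤ digAux (x + k) := hlt.le
        _ ≤ digAux x := ih
  -- limit of digAux at infinity is 0
  have hlim : Filter.Tendsto digAux Filter.atTop (nhds 0) := by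
    have hub : ∀ᶠ y : ℝ in Filter.atTop, digAux y ≤ Real.log y - Real.log (y + 1/2) + 1/y := by
      filter_upwards [Filter.eventually_gt_atTop (0:ℝ)] with y hy
      have := dig_ub hy
      simp only [digAux]; linarith
    have hlb : ∀ᶠ y : ℝ in Filter.atTop,
        Real.log (y - 1) - Real.log (y + 1/2) + 1/y ≤ digAux y := by
      filter_upwards [Filter.eventually_gt_atTop (1:ℝ)] with y hy
      have := dig_lb hy
      simp only [digAux]; linarith
    have hinv : Filter.Tendsto (fun y : ℝ => 1/y) Filter.atTop (nhds 0) :=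
      tendsto_const_nhds.div_atTop tendsto_id
    have tub : Filter.Tendsto (fun y : ℝ => Real.log y - Real.log (y + 1/2) + 1/y)
        Filter.atTop (nhds 0) := by
      have h1 : Filter.Tendsto (fun y : ℝ => Real.log y - Real.log (y + 1/2))
          Filter.atTop (nhds 0) := by
        have heq : ∀ᶠ y : ℝ in Filter.atTop,
            -Real.log (1 + (1/2)/y) = Real.log y - Real.log (y + 1/2) := by
          filter_upwards [Filter.eventually_gt_atTop (0:ℝ)] with y hy
          rw [show Real.log y - Real.log (y + 1/2) = Real.log (y / (y + 1/2)) from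
            (Real.log_div hy.ne' (by positivity)).symm, ← Real.log_inv]
          congr 1
          field_simp
        refine Filter.Tendsto.congr' heq ?_
        have hq : Filter.Tendsto (fun y : ℝ => 1 + (1/2)/y) Filter.atTop (nhds 1) := by
          have := tendsto_const_nhds (x := (1:ℝ)) (f := Filter.atTop (α := ℝ)) |>.add
            ((tendsto_const_nhds (x := (1/2:ℝ)) (f := Filter.atTop (α := ℝ))).div_atTop tendsto_id)
          simpa using this
        have hl : Filter.Tendsto (fun y : ℝ => Real.log (1 + (1/2)/y))
            Filter.atTop (nhds 0) := by
          have := (Real.continuousAt_log one_ne_zero).tendsto.comp hq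
          simpa [Function.comp_def] using this
        simpa using hl.neg
      simpa using h1.add hinv
    have tlb : Filter.Tendsto (fun y : ℝ => Real.log (y - 1) - Real.log (y + 1/2) + 1/y)
        Filter.atTop (nhds 0) := by
      have h1 : Filter.Tendsto (fun y : ℝ => Real.log (y - 1) - Real.log (y + 1/2))
          Filter.atTop (nhds 0) := by
        have heq : ∀ᶠ y : ℝ in Filter.atTop,
            -Real.log (1 + (3/2)/(y - 1)) = Real.log (y - 1) - Real.log (y + 1/2) := by
          filter_upwards [Filter.eventually_gt_atTop (1:ℝ)] with y hy
          have hy1 : (0:ℝ) < y - 1 := by linarith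
          rw [show Real.log (y - 1) - Real.log (y + 1/2) = Real.log ((y - 1) / (y + 1/2)) from
            (Real.log_div hy1.ne' (by positivity)).symm, ← Real.log_inv]
          congr 1
          field_simp
          ring
        refine Filter.Tendsto.congr' heq ?_
        have hsub : Filter.Tendsto (fun y : ℝ => y - 1) Filter.atTop Filter.atTop :=
          tendsto_atTop_add_const_right _ (-1) tendsto_id
        have hq : Filter.Tendsto (fun y : ℝ => 1 + (3/2)/(y - 1)) Filter.atTop (nhds 1) := by
          have := tendsto_const_nhds (x := (1:ℝ)) (f := Filter.atTop (α := ℝ)) |>.add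
            ((tendsto_const_nhds (x := (3/2:ℝ)) (f := Filter.atTop (α := ℝ))).div_atTop hsub)
          simpa using this
        have hl : Filter.Tendsto (fun y : ℝ => Real.log (1 + (3/2)/(y - 1)))
            Filter.atTop (nhds 0) := by
          have := (Real.continuousAt_log one_ne_zero).tendsto.comp hq
          simpa [Function.comp_def] using this
        simpa using hl.neg
      simpa using h1.add hinv
    exact tendsto_of_tendsto_of_tendsto_of_le_of_le' tlb tub hlb hub
  -- conclude
  have hnat : Filter.Tendsto (fun n : ℕ => digAux (t + 1 + n)) Filter.atTop (nhds 0) :=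
    hlim.comp (tendsto_atTop_add_const_left _ _ tendsto_natCast_atTop_atTop)
  have h0 : 0 ≤ digAux (t + 1) :=
    le_of_tendsto hnat (Filter.Eventually.of_forall fun n => hmono (t + 1) (by positivity) n)
  calc (0:ℝ) ≤ digAux (t + 1) := h0
    _ < digAux t := hstep t ht
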